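/- arXiv:2404.17165 — 3 statements merged into one kernel-verified Lean document; each statement's English description precedes it below -/
import Mathlib

section
/- For all integers n ≥ 2, γ + log(n) + 1/(2(n+1)) < H_n < γ + log(n) + 1/(2(n-1)). -/
open Real Filter Set

lemma aux_log_lower {x : ℝ} (hx : 0 < x) : 2*x/(2+x) < Real.log (1+x) := by
  have key : StrictMonoOn (fun y : ℝ => Real.log (1+y) - 2*y/(2+y)) (Set.Ici 0) := by
    apply strictMonoOn_of_deriv_pos (convex_Ici 0)
    · apply ContinuousOn.sub
      · exact (Real.continuousOn_log.comp (by fun_prop)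
          (fun y hy => by simp at hy ⊢; intro h; linarith)).congr (fun y hy => rfl)
      · exact ContinuousOn.div (by fun_prop) (by fun_prop)
          (fun y hy => by simp at hy; positivity)
    · intro y hy
      rw [interior_Ici] at hy
      simp only [mem_Ioi] at hy
      have h1 : HasDerivAt (fun y : ℝ => Real.log (1+y)) (1/(1+y)) y := by
        have := (Real.hasDerivAt_log (by positivity : (1:ℝ)+y ≠ 0)).comp y
          ((hasDerivAt_id y).const_add 1)
        simpa [one_div, Function.comp_def] using this
      have h2 : HasDerivAt (fun y : ℝ => 2*y/(2+y))
          ((2*1*(2+y) - 2*y*1)/(2+y)^2) y := by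
        simpa [Pi.div_def] using (((hasDerivAt_id y).const_mul 2).div ((hasDerivAt_id y).const_add 2)
          (by positivity))
      rw [HasDerivAt.deriv (f := fun y : ℝ => Real.log (1+y) - 2*y/(2+y)) (h1.sub h2)]
      rw [div_sub_div _ _ (by positivity) (by positivity : ((2:ℝ)+y)^2 ≠ 0)]
      apply div_pos
      · nlinarith
      · positivity
  have h := key (self_mem_Ici) (mem_Ici.2 hx.le) hx
  simp at h
  linarith

lemma aux_log_upper {x : ℝ} (hx : 0 < x) : Real.log (1+x) < x*(2+x)/(2*(1+x)) := by
  have key : StrictMonoOn (fun y : ℝ => y*(2+y)/(2*(1+y)) - Real.log (1+y)) (Set.Ici 0) := by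
    apply strictMonoOn_of_deriv_pos (convex_Ici 0)
    · apply ContinuousOn.sub
      · exact ContinuousOn.div (by fun_prop) (by fun_prop)
          (fun y hy => by simp at hy; positivity)
      · exact (Real.continuousOn_log.comp (by fun_prop)
          (fun y hy => by simp at hy ⊢; intro h; linarith)).congr (fun y hy => rfl)
    · intro y hy
      rw [interior_Ici] at hy
      simp only [mem_Ioi] at hy
      have h1 : HasDerivAt (fun y : ℝ => Real.log (1+y)) (1/(1+y)) y := by
        have := (Real.hasDerivAt_log (by positivity : (1:ℝ)+y ≠ 0)).comp y
          ((hasDerivAt_id y).const_add 1)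
        simpa [one_div, Function.comp_def] using this
      have h2 : HasDerivAt (fun y : ℝ => y*(2+y)/(2*(1+y)))
          (((1*(2+y) + y*1)*(2*(1+y)) - y*(2+y)*(2*1))/(2*(1+y))^2) y := by
        exact (((hasDerivAt_id y).mul ((hasDerivAt_id y).const_add 2)).div
          (((hasDerivAt_id y).const_add 1).const_mul 2) (by positivity))
      rw [HasDerivAt.deriv (f := fun y : ℝ => y*(2+y)/(2*(1+y)) - Real.log (1+y)) (h2.sub h1)]
      rw [div_sub_div _ _ (by positivity : ((2:ℝ)*(1+y))^2 ≠ 0) (by positivity)]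
      apply div_pos
      · nlinarith [mul_pos (mul_pos hy hy) (by linarith : (0:ℝ) < 1+y)]
      · positivity
  have h := key (self_mem_Ici) (mem_Ici.2 hx.le) hx
  simp at h
  linarith

lemma step_lower {m : ℝ} (hm : 1 ≤ m) :
    1/(m+1) + 1/(2*(m+1)) - 1/(2*(m+2)) < Real.log (m+1) - Real.log m := by
  have hm0 : (0:ℝ) < m := by linarith
  have hlog := aux_log_lower (x := 1/m) (by positivity)
  have h1 : Real.log (m+1) - Real.log m = Real.log (1 + 1/m) := by
    rw [← Real.log_div (by positivity) (by positivity)]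
    congr 1
    field_simp
  have h2 : 2*(1/m)/(2+1/m) = 2/(2*m+1) := by
    field_simp
  rw [h1]
  refine lt_of_lt_of_le ?_ hlog.le
  rw [h2, div_add_div _ _ (by positivity) (by positivity),
    div_sub_div _ _ (by positivity) (by positivity),
    div_lt_div_iff₀ (by positivity) (by positivity)]
  nlinarith [hm0, sq_nonneg m]

lemma step_upper {m : ℝ} (hm : 2 ≤ m) :
    Real.log (m+1) - Real.log m < 1/(m+1) + 1/(2*(m-1)) - 1/(2*m) := by
  have hm0 : (0:ℝ) < m := by linarith
  have hm1 : (0:ℝ) < m - 1 := by linarith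
  have hlog := aux_log_upper (x := 1/m) (by positivity)
  have h1 : Real.log (m+1) - Real.log m = Real.log (1 + 1/m) := by
    rw [← Real.log_div (by positivity) (by positivity)]
    congr 1
    field_simp
  have h2 : (1/m)*(2+1/m)/(2*(1+1/m)) = (2*m+1)/(2*m*(m+1)) := by
    field_simp
  rw [h1]
  refine lt_of_lt_of_le (h2 ▸ hlog) ?_
  rw [div_add_div _ _ (by positivity) (by positivity),
    div_sub_div _ _ (by positivity) (by positivity),
    div_le_div_iff₀ (by positivity) (by positivity)]
  nlinarith [hm0, hm1, sq_nonneg m]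

noncomputable def uSeq (k : ℕ) : ℝ :=
  (harmonic (k+1) : ℝ) - Real.log (k+1) - 1/(2*((k:ℝ)+2))

noncomputable def vSeq (k : ℕ) : ℝ :=
  (harmonic (k+2) : ℝ) - Real.log (k+2) - 1/(2*((k:ℝ)+1))

lemma uSeq_strictAnti : StrictAnti uSeq := by
  refine strictAnti_nat_of_succ_lt (fun k => ?_)
  have key := step_lower (m := (k:ℝ)+1) (by simp)
  simp only [uSeq, harmonic_succ]
  push_cast
  ring_nf
  ring_nf at key
  linarith

lemma vSeq_strictMono : StrictMono vSeq := by
  refine strictMono_nat_of_lt_succ (fun k => ?_)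
  have key := step_upper (m := (k:ℝ)+2) (by simp)
  simp only [vSeq, harmonic_succ]
  push_cast
  ring_nf
  ring_nf at key
  linarith

lemma uSeq_tendsto : Tendsto uSeq atTop (nhds Real.eulerMascheroniConstant) := by
  have h1 := Real.tendsto_harmonic_sub_log.comp (tendsto_add_atTop_nat 1)
  have h2 : Tendsto (fun k : ℕ => 1/(2*((k:ℝ)+2))) atTop (nhds 0) := by
    apply Tendsto.div_atTop (tendsto_const_nhds)
    apply Filter.Tendsto.const_mul_atTop (by norm_num : (0:ℝ) < 2)
    exact tendsto_atTop_add_const_right _ 2 tendsto_natCast_atTop_atTop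
  have h3 := h1.sub h2
  rw [sub_zero] at h3
  apply h3.congr
  intro k
  show (harmonic (k+1) : ℝ) - Real.log ((k+1 : ℕ) : ℝ) - 1/(2*((k:ℝ)+2)) = uSeq k
  unfold uSeq
  push_cast
  ring_nf

lemma vSeq_tendsto : Tendsto vSeq atTop (nhds Real.eulerMascheroniConstant) := by
  have h1 := Real.tendsto_harmonic_sub_log.comp (tendsto_add_atTop_nat 2)
  have h2 : Tendsto (fun k : ℕ => 1/(2*((k:ℝ)+1))) atTop (nhds 0) := by
    apply Tendsto.div_atTop (tendsto_const_nhds)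
    apply Filter.Tendsto.const_mul_atTop (by norm_num : (0:ℝ) < 2)
    exact tendsto_atTop_add_const_right _ 1 tendsto_natCast_atTop_atTop
  have h3 := h1.sub h2
  rw [sub_zero] at h3
  apply h3.congr
  intro k
  show (harmonic (k+2) : ℝ) - Real.log ((k+2 : ℕ) : ℝ) - 1/(2*((k:ℝ)+1)) = vSeq k
  unfold vSeq
  push_cast
  ring_nf

/-- Tims–Tyrrell (1971): for all integers `n ≥ 2`,
`γ + log n + 1/(2(n+1)) < Hₙ < γ + log n + 1/(2(n-1))`. -/
theorem tims_tyrrell_harmonic_bounds (n : ℕ) (hn : 2 ≤ n) :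
    Real.eulerMascheroniConstant + Real.log n + 1 / (2 * ((n : ℝ) + 1)) <
        (harmonic n : ℝ) ∧
      (harmonic n : ℝ) <
        Real.eulerMascheroniConstant + Real.log n + 1 / (2 * ((n : ℝ) - 1)) := by
  obtain ⟨k, rfl⟩ : ∃ k, n = k + 2 := ⟨n - 2, by omega⟩
  constructor
  · have hlt : Real.eulerMascheroniConstant < uSeq (k+1) :=
      lt_of_le_of_lt (uSeq_strictAnti.antitone.le_of_tendsto uSeq_tendsto (k+2))
        (uSeq_strictAnti (Nat.lt_succ_self (k+1)))
    have he : k+1+1 = k+2 := rfl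
    simp only [uSeq, he] at hlt
    push_cast at hlt ⊢
    ring_nf at hlt ⊢
    linarith
  · have hlt : vSeq k < Real.eulerMascheroniConstant :=
      lt_of_lt_of_le (vSeq_strictMono (Nat.lt_succ_self k))
        (vSeq_strictMono.monotone.ge_of_tendsto vSeq_tendsto (k+1))
    simp only [vSeq] at hlt
    push_cast at hlt ⊢
    ring_nf at hlt ⊢
    linarith
end

section
/- For all natural numbers n ≥ 1, γ + log(n + 1/2) + 1/(24(n+1)²) < H_n < γ + log(n + 1/2) + 1/(24n²). -/
open Real Set Filter

private lemma log_lb' (x : ℝ) (hx0 : 0 ≤ x) (hx1 : x < 1) :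
    2*x + 2/3*x^3 ≤ Real.log (1+x) - Real.log (1-x) := by
  set F : ℝ → ℝ := fun t => Real.log (1+t) - Real.log (1-t) - 2*t - 2/3*t^3 with hF
  have key : ∀ t ∈ Icc (0:ℝ) x, HasDerivAt F (1/(1+t) + 1/(1-t) - 2 - 2*t^2) t := by
    intro t ht
    obtain ⟨ht0, htx⟩ := ht
    have h1 : (0:ℝ) < 1 + t := by linarith
    have h2 : (0:ℝ) < 1 - t := by linarith
    have d1 : HasDerivAt (fun t : ℝ => Real.log (1+t)) (1/(1+t)) t := by
      simpa using ((hasDerivAt_id t).const_add 1).log h1.ne'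
    have d2 : HasDerivAt (fun t : ℝ => Real.log (1-t)) (-(1/(1-t))) t := by
      simpa [neg_div] using ((hasDerivAt_id t).const_sub 1).log h2.ne'
    have d3 : HasDerivAt (fun t : ℝ => 2*t) 2 t := by
      simpa using (hasDerivAt_id t).const_mul 2
    have d4 : HasDerivAt (fun t : ℝ => 2/3*t^3) (2/3*(3*t^2)) t := by
      simpa using (hasDerivAt_pow 3 t).const_mul (2/3)
    have := ((d1.sub d2).sub d3).sub d4
    exact this.congr_deriv (by ring)
  have hmono : MonotoneOn F (Icc 0 x) := by
    apply monotoneOn_of_deriv_nonneg (convex_Icc 0 x)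
    · exact fun t ht => ((key t ht).continuousAt).continuousWithinAt
    · intro t ht
      rw [interior_Icc] at ht
      exact ((key t ⟨ht.1.le, ht.2.le⟩).differentiableAt).differentiableWithinAt
    · intro t ht
      rw [interior_Icc] at ht
      obtain ⟨ht0, htx⟩ := ht
      rw [(key t ⟨ht0.le, htx.le⟩).deriv]
      have h1 : (0:ℝ) < 1 + t := by linarith
      have h2 : (0:ℝ) < 1 - t := by linarith
      have heq : 1/(1+t) + 1/(1-t) - 2 - 2*t^2 = 2*t^4 / ((1+t)*(1-t)) := by
        field_simp
        ring
      rw [heq]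
      positivity
  have h0 : F 0 = 0 := by simp [hF]
  have := hmono (left_mem_Icc.2 hx0) (right_mem_Icc.2 hx0) hx0
  rw [h0] at this
  simp only [hF] at this
  linarith

private lemma log_ub' (x : ℝ) (hx0 : 0 ≤ x) (hx1 : x < 1) :
    Real.log (1+x) - Real.log (1-x) ≤ 2*x + 2*x^3/(3*(1-x^2)) := by
  set F : ℝ → ℝ := fun t => 2*t + 2*t^3/(3*(1-t^2)) - (Real.log (1+t) - Real.log (1-t)) with hF
  have key : ∀ t ∈ Icc (0:ℝ) x, HasDerivAt F
      (2 + (2*(3*t^2)*(3*(1-t^2)) - 2*t^3*(3*(-(2*t))))/(3*(1-t^2))^2 - (1/(1+t) + 1/(1-t))) t := by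
    intro t ht
    obtain ⟨ht0, htx⟩ := ht
    have h1 : (0:ℝ) < 1 + t := by linarith
    have h2 : (0:ℝ) < 1 - t := by linarith
    have hden : (3:ℝ)*(1-t^2) ≠ 0 := by nlinarith
    have d1 : HasDerivAt (fun t : ℝ => Real.log (1+t)) (1/(1+t)) t := by
      simpa using ((hasDerivAt_id t).const_add 1).log h1.ne'
    have d2 : HasDerivAt (fun t : ℝ => Real.log (1-t)) (-(1/(1-t))) t := by
      simpa [neg_div] using ((hasDerivAt_id t).const_sub 1).log h2.ne'
    have d3 : HasDerivAt (fun t : ℝ => 2*t) 2 t := by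
      simpa using (hasDerivAt_id t).const_mul 2
    have dn : HasDerivAt (fun t : ℝ => 2*t^3) (2*(3*t^2)) t := by
      simpa using (hasDerivAt_pow 3 t).const_mul 2
    have dd : HasDerivAt (fun t : ℝ => 3*(1-t^2)) (3*(-(2*t))) t := by
      have := ((hasDerivAt_pow 2 t).const_sub 1).const_mul 3
      simpa using this
    have d4 := dn.div dd hden
    have := (d3.add d4).sub (d1.sub d2)
    exact this.congr_deriv (by ring)
  have hmono : MonotoneOn F (Icc 0 x) := by
    apply monotoneOn_of_deriv_nonneg (convex_Icc 0 x)
    · exact fun t ht => ((key t ht).continuousAt).continuousWithinAt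
    · intro t ht
      rw [interior_Icc] at ht
      exact ((key t ⟨ht.1.le, ht.2.le⟩).differentiableAt).differentiableWithinAt
    · intro t ht
      rw [interior_Icc] at ht
      obtain ⟨ht0, htx⟩ := ht
      rw [(key t ⟨ht0.le, htx.le⟩).deriv]
      have h1 : (0:ℝ) < 1 + t := by linarith
      have h2 : (0:ℝ) < 1 - t := by linarith
      have hd : (0:ℝ) < 1 - t^2 := by nlinarith
      have heq : 2 + (2*(3*t^2)*(3*(1-t^2)) - 2*t^3*(3*(-(2*t))))/(3*(1-t^2))^2 - (1/(1+t) + 1/(1-t))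
          = 4*t^4/(3*(1-t^2)^2) := by
        field_simp
        ring
      rw [heq]
      positivity
  have h0 : F 0 = 0 := by simp [hF]
  have := hmono (left_mem_Icc.2 hx0) (right_mem_Icc.2 hx0) hx0
  rw [h0] at this
  simp only [hF] at this
  linarith

private noncomputable def Aseq (k : ℕ) : ℝ :=
  (harmonic (k+1) : ℝ) - Real.log ((k:ℝ)+1+1/2) - 1/(24*((k:ℝ)+1)^2)

private noncomputable def Bseq (k : ℕ) : ℝ :=
  (harmonic (k+1) : ℝ) - Real.log ((k:ℝ)+1+1/2) - 1/(24*((k:ℝ)+1+1)^2)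

private lemma log_diff_eq (N : ℝ) (hN : 1 ≤ N) :
    Real.log (N+1+1/2) - Real.log (N+1/2)
      = Real.log (1+1/(2*(N+1))) - Real.log (1-1/(2*(N+1))) := by
  have hNpos : (0:ℝ) < N + 1 := by linarith
  have hx0 : 0 < 1/(2*(N+1)) := by positivity
  have hx1 : 1/(2*(N+1)) < 1/2 := by
    rw [div_lt_div_iff₀ (by linarith) (by norm_num)]
    linarith
  have e1 : N+1+1/2 = (1+1/(2*(N+1)))*(N+1) := by field_simp
  have e2 : N+1/2 = (1-1/(2*(N+1)))*(N+1) := by field_simp; ring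
  rw [e1, e2, Real.log_mul (by linarith) hNpos.ne', Real.log_mul (by linarith) hNpos.ne']
  ring

private lemma hx01 (N : ℝ) (hN : 1 ≤ N) :
    0 ≤ 1/(2*(N+1)) ∧ 1/(2*(N+1)) < 1 := by
  constructor
  · positivity
  · rw [div_lt_one (by linarith)]; linarith

private lemma polyA (N : ℝ) (hN : 1 ≤ N) :
    2*(1/(2*(N+1))) + 2*(1/(2*(N+1)))^3/(3*(1-(1/(2*(N+1)))^2))
      < 1/(N+1) + 1/(24*N^2) - 1/(24*(N+1)^2) := by
  have h1 : (0:ℝ) < N := by linarith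
  have h2 : (0:ℝ) < N+1 := by linarith
  have h3 : (0:ℝ) < 2*N+1 := by linarith
  have h4 : (0:ℝ) < 2*N+3 := by linarith
  have hz : (1:ℝ)-(1/(2*(N+1)))^2 ≠ 0 := by
    have : (1/(2*(N+1)))^2 < 1 := by
      rw [div_pow, div_lt_one (by positivity)]
      nlinarith
    linarith
  have hxsq : 1-(1/(2*(N+1)))^2 = ((2*N+1)*(2*N+3))/(4*(N+1)^2) := by
    field_simp
    ring
  have e1 : 2*(1/(2*(N+1))) + 2*(1/(2*(N+1)))^3/(3*(1-(1/(2*(N+1)))^2))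
      = 1/(N+1) + 1/(3*(N+1)*(2*N+1)*(2*N+3)) := by
    rw [hxsq]
    field_simp
    ring
  have e2 : 1/(24*N^2) - 1/(24*(N+1)^2) = (2*N+1)/(24*N^2*(N+1)^2) := by
    field_simp
    ring
  have key : 1/(3*(N+1)*(2*N+1)*(2*N+3)) < (2*N+1)/(24*N^2*(N+1)^2) := by
    rw [div_lt_div_iff₀ (by positivity) (by positivity)]
    nlinarith [sq_nonneg N]
  linarith

private lemma polyB (N : ℝ) (hN : 1 ≤ N) :
    1/(N+1) + 1/(24*(N+1)^2) - 1/(24*(N+2)^2)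
      < 2*(1/(2*(N+1))) + 2/3*(1/(2*(N+1)))^3 := by
  have h2 : (0:ℝ) < N+1 := by linarith
  have h5 : (0:ℝ) < N+2 := by linarith
  have e1 : 2*(1/(2*(N+1))) + 2/3*(1/(2*(N+1)))^3
      = 1/(N+1) + 1/(12*(N+1)^3) := by
    field_simp
    ring
  have e2 : 1/(24*(N+1)^2) - 1/(24*(N+2)^2) = (2*N+3)/(24*(N+1)^2*(N+2)^2) := by
    field_simp
    ring
  have key : (2*N+3)/(24*(N+1)^2*(N+2)^2) < 1/(12*(N+1)^3) := by
    rw [div_lt_div_iff₀ (by positivity) (by positivity)]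
    nlinarith
  linarith

private lemma stepA (k : ℕ) : Aseq k < Aseq (k+1) := by
  have hk : (0:ℝ) ≤ (k:ℝ) := Nat.cast_nonneg k
  have hN : (1:ℝ) ≤ (k:ℝ)+1 := by linarith
  obtain ⟨hx0, hx1⟩ := hx01 ((k:ℝ)+1) hN
  have hlog := log_ub' (1/(2*((k:ℝ)+1+1))) hx0 hx1
  have hld := log_diff_eq ((k:ℝ)+1) hN
  have hpoly := polyA ((k:ℝ)+1) hN
  have hharm : (harmonic (k+1+1) : ℝ) = (harmonic (k+1) : ℝ) + 1/((k:ℝ)+1+1) := by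
    rw [harmonic_succ]
    push_cast
    ring
  simp only [Aseq]
  push_cast
  rw [hharm]
  linarith

private lemma stepB (k : ℕ) : Bseq (k+1) < Bseq k := by
  have hk : (0:ℝ) ≤ (k:ℝ) := Nat.cast_nonneg k
  have hN : (1:ℝ) ≤ (k:ℝ)+1 := by linarith
  obtain ⟨hx0, hx1⟩ := hx01 ((k:ℝ)+1) hN
  have hlog := log_lb' (1/(2*((k:ℝ)+1+1))) hx0 hx1
  have hld := log_diff_eq ((k:ℝ)+1) hN
  have hpoly := polyB ((k:ℝ)+1) hN
  have hharm : (harmonic (k+1+1) : ℝ) = (harmonic (k+1) : ℝ) + 1/((k:ℝ)+1+1) := by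
    rw [harmonic_succ]
    push_cast
    ring
  simp only [Bseq]
  push_cast
  rw [hharm, show ((k:ℝ)+1+1+1) = (k:ℝ)+1+2 from by ring]
  linarith

private lemma tendsto_aux :
    Tendsto (fun k : ℕ => (harmonic (k+1) : ℝ) - Real.log ((k:ℝ)+1+1/2)) atTop
      (nhds Real.eulerMascheroniConstant) := by
  have h1 : Tendsto (fun k : ℕ => Real.eulerMascheroniSeq (k+1)) atTop
      (nhds Real.eulerMascheroniConstant) :=
    Real.tendsto_eulerMascheroniSeq.comp (tendsto_add_atTop_nat 1)
  have h2 : Tendsto (fun k : ℕ => Real.log ((k:ℝ)+2) - Real.log ((k:ℝ)+1+1/2)) atTop (nhds 0) := by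
    apply squeeze_zero (fun k => ?_) (fun k => ?_) tendsto_one_div_add_atTop_nhds_zero_nat
    · have : (0:ℝ) ≤ (k:ℝ) := Nat.cast_nonneg k
      have := Real.log_le_log (by linarith : (0:ℝ) < (k:ℝ)+1+1/2) (by linarith : (k:ℝ)+1+1/2 ≤ (k:ℝ)+2)
      linarith
    · have hk : (0:ℝ) ≤ (k:ℝ) := Nat.cast_nonneg k
      have hpos : (0:ℝ) < (k:ℝ)+1+1/2 := by linarith
      have hr : Real.log (((k:ℝ)+2)/((k:ℝ)+1+1/2)) ≤ ((k:ℝ)+2)/((k:ℝ)+1+1/2) - 1 :=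
        Real.log_le_sub_one_of_pos (by positivity)
      rw [Real.log_div (by linarith) hpos.ne'] at hr
      have : ((k:ℝ)+2)/((k:ℝ)+1+1/2) - 1 ≤ 1/((k:ℝ)+1) := by
        rw [div_sub_one hpos.ne', div_le_div_iff₀ hpos (by linarith)]
        nlinarith
      linarith
  have key : (fun k : ℕ => (harmonic (k+1) : ℝ) - Real.log ((k:ℝ)+1+1/2))
      = fun k : ℕ => Real.eulerMascheroniSeq (k+1) + (Real.log ((k:ℝ)+2) - Real.log ((k:ℝ)+1+1/2)) := by
    funext k
    simp only [Real.eulerMascheroniSeq]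
    push_cast
    ring_nf
  rw [key]
  simpa using h1.add h2

private lemma tendsto_inv_sq (c : ℝ) (hc : 0 ≤ c) :
    Tendsto (fun k : ℕ => 1/(24*((k:ℝ)+1+c)^2)) atTop (nhds 0) := by
  apply squeeze_zero (fun k => by positivity) (fun k => ?_) tendsto_one_div_add_atTop_nhds_zero_nat
  have hk : (0:ℝ) ≤ (k:ℝ) := Nat.cast_nonneg k
  rw [div_le_div_iff₀ (by positivity) (by positivity)]
  nlinarith

private lemma tendsto_Aseq :
    Tendsto Aseq atTop (nhds Real.eulerMascheroniConstant) := by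
  have h := tendsto_aux.sub (tendsto_inv_sq 0 le_rfl)
  simp only [sub_zero] at h
  convert h using 2 with k
  simp [Aseq]

private lemma tendsto_Bseq :
    Tendsto Bseq atTop (nhds Real.eulerMascheroniConstant) := by
  have h := tendsto_aux.sub (tendsto_inv_sq 1 zero_le_one)
  simp only [sub_zero] at h
  convert h using 2
  rfl

private lemma Aseq_lt (k : ℕ) : Aseq k < Real.eulerMascheroniConstant :=
  lt_of_lt_of_le (stepA k)
    ((strictMono_nat_of_lt_succ stepA).monotone.ge_of_tendsto tendsto_Aseq (k+1))

private lemma lt_Bseq (k : ℕ) : Real.eulerMascheroniConstant < Bseq k :=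
  lt_of_le_of_lt
    ((strictAnti_nat_of_succ_lt stepB).antitone.le_of_tendsto tendsto_Bseq (k+1))
    (stepB k)

/-- DeTemple (1993): for all natural numbers `n ≥ 1`,
`γ + log(n + 1/2) + 1/(24(n+1)²) < Hₙ < γ + log(n + 1/2) + 1/(24n²)`. -/
theorem deTemple_harmonic_bounds (n : ℕ) (hn : 1 ≤ n) :
    Real.eulerMascheroniConstant + Real.log ((n : ℝ) + 1 / 2) +
        1 / (24 * ((n : ℝ) + 1) ^ 2) < (harmonic n : ℝ) ∧
      (harmonic n : ℝ) <
        Real.eulerMascheroniConstant + Real.log ((n : ℝ) + 1 / 2) +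
          1 / (24 * (n : ℝ) ^ 2) := by
  obtain ⟨k, rfl⟩ : ∃ k, n = k + 1 := ⟨n - 1, (Nat.succ_pred_eq_of_pos hn).symm⟩
  have hA := Aseq_lt k
  have hB := lt_Bseq k
  simp only [Aseq, Bseq] at hA hB
  push_cast
  constructor
  · linarith
  · linarith
end

section
/- For all natural numbers n ≥ 1, γ + log(n + 1/2) + 1/(24(n+a)²) ≤ H_n < γ + log(n + 1/2) + 1/(24(n+b)²), where a = 1/√(24·(1 − γ − log(3/2))) and b = 1/2. -/
open Real Set Filter Topology

private lemma chen_log_ratio_ge {t : ℝ} (h0 : 0 ≤ t) (h1 : t < 1) :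
    2*t + 2*t^3/3 ≤ Real.log (1+t) - Real.log (1-t) := by
  set f : ℝ → ℝ := fun s => Real.log (1+s) - Real.log (1-s) - 2*s - 2*s^3/3 with hf
  have hder : ∀ s ∈ Set.Ico (0:ℝ) 1, HasDerivAt f (2*s^4/(1-s^2)) s := by
    rintro s ⟨hs0, hs1⟩
    have h1p : (0:ℝ) < 1 + s := by linarith
    have h1m : (0:ℝ) < 1 - s := by linarith
    have d1 : HasDerivAt (fun s : ℝ => Real.log (1+s)) (1/(1+s)) s := by
      simpa using (((hasDerivAt_id s).const_add 1).log h1p.ne')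
    have d2 : HasDerivAt (fun s : ℝ => Real.log (1-s)) ((-1)/(1-s)) s := by
      simpa using (((hasDerivAt_id s).const_sub 1).log h1m.ne')
    have d3 : HasDerivAt (fun s : ℝ => 2*s) 2 s := by
      simpa using (hasDerivAt_id s).const_mul 2
    have d4 : HasDerivAt (fun s : ℝ => 2*s^3/3) (2*(3*s^2)/3) s := by
      simpa using ((hasDerivAt_pow 3 s).const_mul 2).div_const 3
    have := ((d1.sub d2).sub d3).sub d4
    refine this.congr_deriv ?_
    have hs2 : (1:ℝ) - s^2 ≠ 0 := by nlinarith
    field_simp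
    ring
  have mono : MonotoneOn f (Set.Ico (0:ℝ) 1) := by
    apply monotoneOn_of_deriv_nonneg (convex_Ico 0 1)
    · intro s hs; exact ((hder s hs).continuousAt).continuousWithinAt
    · rw [interior_Ico]; intro s hs
      exact ((hder s ⟨hs.1.le, hs.2⟩).differentiableAt).differentiableWithinAt
    · rw [interior_Ico]; intro s hs
      rw [(hder s ⟨hs.1.le, hs.2⟩).deriv]
      have : (0:ℝ) < 1 - s^2 := by nlinarith [hs.1, hs.2]
      positivity
  have h := mono (Set.mem_Ico.mpr ⟨le_refl 0, one_pos⟩) (Set.mem_Ico.mpr ⟨h0, h1⟩) h0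
  simp only [hf] at h
  norm_num at h
  linarith

private lemma chen_log_ratio_le {t : ℝ} (h0 : 0 ≤ t) (h1 : t < 1) :
    Real.log (1+t) - Real.log (1-t) ≤ 2*t + 2*t^3/(3*(1-t^2)) := by
  set g : ℝ → ℝ := fun s => 2*s + 2*s^3/(3*(1-s^2)) - (Real.log (1+s) - Real.log (1-s)) with hg
  have hder : ∀ s ∈ Set.Ico (0:ℝ) 1, HasDerivAt g (4*s^4/(3*(1-s^2)^2)) s := by
    rintro s ⟨hs0, hs1⟩
    have h1p : (0:ℝ) < 1 + s := by linarith
    have h1m : (0:ℝ) < 1 - s := by linarith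
    have hs2 : (0:ℝ) < 1 - s^2 := by nlinarith
    have d1 : HasDerivAt (fun s : ℝ => Real.log (1+s)) (1/(1+s)) s := by
      simpa using (((hasDerivAt_id s).const_add 1).log h1p.ne')
    have d2 : HasDerivAt (fun s : ℝ => Real.log (1-s)) ((-1)/(1-s)) s := by
      simpa using (((hasDerivAt_id s).const_sub 1).log h1m.ne')
    have d3 : HasDerivAt (fun s : ℝ => 2*s) 2 s := by
      simpa using (hasDerivAt_id s).const_mul 2
    have dnum : HasDerivAt (fun s : ℝ => 2*s^3) (2*(3*s^2)) s := by
      simpa using (hasDerivAt_pow 3 s).const_mul 2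
    have dden : HasDerivAt (fun s : ℝ => 3*(1-s^2)) (3*(-(2*s))) s := by
      have := ((hasDerivAt_pow 2 s).const_sub 1).const_mul 3
      simpa using this
    have d4 : HasDerivAt (fun s : ℝ => 2*s^3/(3*(1-s^2)))
        ((2*(3*s^2)*(3*(1-s^2)) - 2*s^3*(3*(-(2*s))))/(3*(1-s^2))^2) s :=
      dnum.div dden (by positivity)
    have := ((d3.add d4).sub (d1.sub d2))
    refine this.congr_deriv ?_
    field_simp
    ring
  have mono : MonotoneOn g (Set.Ico (0:ℝ) 1) := by
    apply monotoneOn_of_deriv_nonneg (convex_Ico 0 1)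
    · intro s hs; exact ((hder s hs).continuousAt).continuousWithinAt
    · rw [interior_Ico]; intro s hs
      exact ((hder s ⟨hs.1.le, hs.2⟩).differentiableAt).differentiableWithinAt
    · rw [interior_Ico]; intro s hs
      rw [(hder s ⟨hs.1.le, hs.2⟩).deriv]
      have : (0:ℝ) < 1 - s^2 := by nlinarith [hs.1, hs.2]
      positivity
  have h := mono (Set.mem_Ico.mpr ⟨le_refl 0, one_pos⟩) (Set.mem_Ico.mpr ⟨h0, h1⟩) h0
  simp only [hg] at h
  norm_num at h
  linarith

private lemma chen_log_ratio_le_x {x : ℝ} (hx : 1 ≤ x) :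
    Real.log (x + 1/2) - Real.log (x - 1/2) ≤ 1/x + 1/(12*x*(x^2-1/4)) := by
  have hx0 : (0:ℝ) < x := by linarith
  have hxm : (0:ℝ) < x - 1/2 := by linarith
  have hxq : (0:ℝ) < x^2 - 1/4 := by nlinarith
  have h0 : (0:ℝ) ≤ 1/(2*x) := by positivity
  have h1 : 1/(2*x) < 1 := by rw [div_lt_one (by linarith)]; linarith
  have H := chen_log_ratio_le h0 h1
  have e1 : 1 + 1/(2*x) = (x+1/2)/x := by field_simp
  have e2 : 1 - 1/(2*x) = (x-1/2)/x := by field_simp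
  rw [e1, e2, Real.log_div (by positivity) hx0.ne', Real.log_div hxm.ne' hx0.ne'] at H
  have e3 : 2*(1/(2*x)) + 2*(1/(2*x))^3/(3*(1-(1/(2*x))^2)) = 1/x + 1/(12*x*(x^2-1/4)) := by
    have h3 : (4:ℝ)*x^2-1 ≠ 0 := by nlinarith
    have h4 : (2*x)^2 - 1 ≠ (0:ℝ) := by nlinarith
    have h5 : x^2*4 - 1 ≠ (0:ℝ) := by nlinarith
    have hne : (1:ℝ) - (1/(2*x))^2 ≠ 0 := by
      have : (1:ℝ) - (1/(2*x))^2 = (x^2-1/4)/x^2 := by field_simp; ring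
      rw [this]; positivity
    rw [show (1:ℝ) - (1/(2*x))^2 = (x^2-1/4)/x^2 by field_simp; ring]
    field_simp
    ring
  linarith

private lemma chen_log_ratio_ge_x {x : ℝ} (hx : 1 ≤ x) :
    1/x + 1/(12*x^3) ≤ Real.log (x + 1/2) - Real.log (x - 1/2) := by
  have hx0 : (0:ℝ) < x := by linarith
  have hxm : (0:ℝ) < x - 1/2 := by linarith
  have h0 : (0:ℝ) ≤ 1/(2*x) := by positivity
  have h1 : 1/(2*x) < 1 := by rw [div_lt_one (by linarith)]; linarith
  have H := chen_log_ratio_ge h0 h1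
  have e1 : 1 + 1/(2*x) = (x+1/2)/x := by field_simp
  have e2 : 1 - 1/(2*x) = (x-1/2)/x := by field_simp
  rw [e1, e2, Real.log_div (by positivity) hx0.ne', Real.log_div hxm.ne' hx0.ne'] at H
  have e3 : 2*(1/(2*x)) + 2*(1/(2*x))^3/3 = 1/x + 1/(12*x^3) := by
    field_simp; ring
  linarith

private lemma chen_step_up {x : ℝ} (hx : 1 ≤ x) :
    Real.log (x+1/2) - Real.log (x-1/2) < 1/x - 1/(24*(x+1/2)^2) + 1/(24*(x-1/2)^2) := by
  have hx0 : (0:ℝ) < x := by linarith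
  have hxm : (0:ℝ) < x - 1/2 := by linarith
  have hxp : (0:ℝ) < x + 1/2 := by linarith
  have hxq : (0:ℝ) < x^2 - 1/4 := by nlinarith
  have hlog := chen_log_ratio_le_x hx
  have key : 1/(24*(x-1/2)^2) - 1/(24*(x+1/2)^2) - 1/(12*x*(x^2-1/4))
      = 1/(48*x*(x^2-1/4)^2) := by
    have n1 : (24*(x-1/2)^2 : ℝ) ≠ 0 := ne_of_gt (by nlinarith [pow_pos hxm 2])
    have n2 : (24*(x+1/2)^2 : ℝ) ≠ 0 := ne_of_gt (by nlinarith [pow_pos hxp 2])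
    have n3 : (12*x*(x^2-1/4) : ℝ) ≠ 0 := ne_of_gt (by nlinarith [mul_pos hx0 hxq])
    have n4 : (48*x*(x^2-1/4)^2 : ℝ) ≠ 0 := ne_of_gt (by nlinarith [mul_pos hx0 (pow_pos hxq 2)])
    rw [div_sub_div _ _ n1 n2, div_sub_div _ _ (mul_ne_zero n1 n2) n3,
        div_eq_div_iff (mul_ne_zero (mul_ne_zero n1 n2) n3) n4]
    ring
  have pos : (0:ℝ) < 1/(48*x*(x^2-1/4)^2) := by positivity
  linarith

private lemma chen_step_down {x c : ℝ} (hx : 1 ≤ x) (hc : x + 1/2 ≤ c) :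
    1/(24*c^2) - 1/(24*(c+1)^2) ≤ Real.log (x+1/2) - Real.log (x-1/2) - 1/x := by
  have hx0 : (0:ℝ) < x := by linarith
  have hc0 : (0:ℝ) < c := by linarith
  have hlog := chen_log_ratio_ge_x hx
  have heq : 1/(24*c^2) - 1/(24*(c+1)^2) = (2*c+1)/(24*c^2*(c+1)^2) := by
    field_simp; ring
  have hx3 : x^3 ≤ (c-1/2)^3 := pow_le_pow_left₀ (by linarith) (by linarith) 3
  have hpoly : (2*c+1)*(12*x^3) ≤ 1*(24*c^2*(c+1)^2) := by
    have h1 : (2*c+1)*(12*x^3) ≤ (2*c+1)*(12*(c-1/2)^3) := by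
      have : (0:ℝ) ≤ 2*c+1 := by linarith
      nlinarith [mul_le_mul_of_nonneg_left hx3 this]
    have h2 : (2*c+1)*(12*(c-1/2)^3) ≤ 1*(24*c^2*(c+1)^2) := by
      nlinarith [pow_pos hc0 3, sq_nonneg (c-1/8)]
    linarith
  have h2 : (2*c+1)/(24*c^2*(c+1)^2) ≤ 1/(12*x^3) := by
    rw [div_le_div_iff₀ (by positivity) (by positivity)]
    linarith
  linarith

/-- The Chen comparison sequence. -/
noncomputable def chenU (r : ℝ) (n : ℕ) : ℝ :=
  (harmonic n : ℝ) - Real.log ((n:ℝ) + 1/2) - 1/(24*((n:ℝ)+r)^2)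

private lemma chenU_strictMono : StrictMono (chenU (1/2)) := by
  apply strictMono_nat_of_lt_succ
  intro n
  have hx : (1:ℝ) ≤ (n:ℝ) + 1 := by
    have : (0:ℝ) ≤ (n:ℝ) := Nat.cast_nonneg n
    linarith
  have H := chen_step_up hx
  simp only [chenU]
  push_cast [harmonic_succ]
  have e1 : (n:ℝ) + 1/2 = ((n:ℝ)+1) - 1/2 := by ring
  rw [e1]
  simp only [inv_eq_one_div]
  linarith

private lemma chenU_antitone {r : ℝ} (hr : 3/2 ≤ r) : Antitone (chenU r) := by
  apply antitone_nat_of_succ_le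
  intro n
  have hx : (1:ℝ) ≤ (n:ℝ) + 1 := by
    have : (0:ℝ) ≤ (n:ℝ) := Nat.cast_nonneg n
    linarith
  have hc : ((n:ℝ)+1) + 1/2 ≤ (n:ℝ) + r := by linarith
  have H := chen_step_down hx hc
  simp only [chenU]
  push_cast [harmonic_succ]
  have e1 : (n:ℝ) + 1/2 = ((n:ℝ)+1) - 1/2 := by ring
  have e2 : (n:ℝ) + 1 + r = ((n:ℝ)+r) + 1 := by ring
  rw [e1, e2]
  simp only [inv_eq_one_div]
  linarith

private lemma chenU_tendsto (r : ℝ) (hr : 0 ≤ r) :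
    Tendsto (chenU r) atTop (𝓝 Real.eulerMascheroniConstant) := by
  have hnat : Tendsto (fun n : ℕ => (n:ℝ)) atTop atTop := tendsto_natCast_atTop_atTop
  have t1 := Real.tendsto_harmonic_sub_log
  have t2 : Tendsto (fun n : ℕ => Real.log (1 + (1/2)/(n:ℝ))) atTop (𝓝 0) := by
    have h2 : Tendsto (fun n : ℕ => 1 + (1/2)/(n:ℝ)) atTop (𝓝 1) := by
      simpa using (tendsto_const_nhds.div_atTop hnat).const_add (1:ℝ)
    simpa using h2.log one_ne_zero
  have t3 : Tendsto (fun n : ℕ => 1/(24*((n:ℝ)+r)^2)) atTop (𝓝 0) := by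
    have h : Tendsto (fun n : ℕ => (n:ℝ)+r) atTop atTop :=
      tendsto_atTop_add_const_right _ r hnat
    have h2 := (h.inv_tendsto_atTop.pow 2).const_mul (1/24 : ℝ)
    norm_num at h2
    apply h2.congr
    intro n
    simp [one_div, mul_inv, inv_pow, mul_comm]
  have comb := (t1.sub t2).sub t3
  rw [sub_zero, sub_zero] at comb
  apply comb.congr'
  filter_upwards [eventually_ge_atTop 1] with n hn
  have hn0 : (0:ℝ) < (n:ℝ) := by exact_mod_cast Nat.pos_of_ne_zero (by omega)
  have hlog : Real.log ((n:ℝ) + 1/2) = Real.log (n:ℝ) + Real.log (1 + (1/2)/(n:ℝ)) := by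
    rw [← Real.log_mul hn0.ne' (by positivity)]
    congr 1
    field_simp
  simp only [chenU]
  rw [hlog]
  ring

private lemma chenU_lt_gamma (n : ℕ) :
    chenU (1/2) n < Real.eulerMascheroniConstant :=
  (chenU_strictMono (Nat.lt_succ_self n)).trans_le
    (chenU_strictMono.monotone.ge_of_tendsto (chenU_tendsto _ (by norm_num)) (n+1))

private lemma gamma_le_chenU {r : ℝ} (hr : 3/2 ≤ r) (n : ℕ) :
    Real.eulerMascheroniConstant ≤ chenU r n :=
  (chenU_antitone hr).le_of_tendsto (chenU_tendsto r (by linarith)) n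

private lemma chen_harmonic_six : (harmonic 6 : ℝ) = 49/20 := by
  have : (harmonic 6 : ℚ) = 49/20 := by norm_num [harmonic, Finset.sum_range_succ]
  rw [this]; norm_num

private lemma chen_harmonic_three : (harmonic 3 : ℝ) = 11/6 := by
  have : (harmonic 3 : ℚ) = 11/6 := by norm_num [harmonic, Finset.sum_range_succ]
  rw [this]; norm_num

private lemma chen_gamma_lb :
    (49:ℝ)/20 - Real.log (13/2) - 1/1014 ≤ Real.eulerMascheroniConstant := by
  have h := (chenU_strictMono.monotone.ge_of_tendsto
    (chenU_tendsto _ (by norm_num)) 6 : chenU (1/2) 6 ≤ _)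
  simp only [chenU, chen_harmonic_six] at h
  norm_num at h
  linarith

private lemma chen_gamma_ub :
    Real.eulerMascheroniConstant ≤ (11:ℝ)/6 - Real.log (7/2) - 1/486 := by
  have h := gamma_le_chenU (le_refl (3/2 : ℝ)) 3
  simp only [chenU, chen_harmonic_three] at h
  norm_num at h
  linarith

private lemma chen_a_ge : (3:ℝ)/2 ≤ 1 / Real.sqrt (24 * (1 - Real.eulerMascheroniConstant -
      Real.log (3 / 2))) := by
  -- bound log (7/3) from below
  have h73 : (316:ℝ)/375 ≤ Real.log ((7:ℝ)/3) := by
    have H := chen_log_ratio_ge (t := 2/5) (by norm_num) (by norm_num)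
    have e1 : (1:ℝ) + 2/5 = 7/5 := by norm_num
    have e2 : (1:ℝ) - 2/5 = 3/5 := by norm_num
    rw [e1, e2, ← Real.log_div (by norm_num) (by norm_num)] at H
    norm_num at H ⊢
    linarith
  -- bound log (13/12) from above
  have h1312 : Real.log ((13:ℝ)/12) ≤ 2/25 + 1/23400 := by
    have H := chen_log_ratio_le (t := 1/25) (by norm_num) (by norm_num)
    have e1 : (1:ℝ) + 1/25 = 26/25 := by norm_num
    have e2 : (1:ℝ) - 1/25 = 24/25 := by norm_num
    rw [e1, e2, ← Real.log_div (by norm_num) (by norm_num)] at H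
    norm_num at H ⊢
    linarith
  -- log (13/3) = 2 log 2 + log (13/12)
  have h133 : Real.log ((13:ℝ)/3) = 2 * Real.log 2 + Real.log ((13:ℝ)/12) := by
    rw [show (13:ℝ)/3 = 2^2 * (13/12) by norm_num,
      Real.log_mul (by norm_num) (by norm_num), Real.log_pow]
    push_cast; ring
  have hlog2 := Real.log_two_lt_d9
  -- upper bound on q := 1 - γ - log (3/2)
  have hsplit1 : Real.log ((13:ℝ)/2) - Real.log ((3:ℝ)/2) = Real.log ((13:ℝ)/3) := by
    rw [← Real.log_div (by norm_num) (by norm_num)]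
    norm_num
  have hsplit2 : Real.log ((7:ℝ)/2) - Real.log ((3:ℝ)/2) = Real.log ((7:ℝ)/3) := by
    rw [← Real.log_div (by norm_num) (by norm_num)]
    norm_num
  have hqub : 1 - Real.eulerMascheroniConstant - Real.log (3/2) ≤ 1/54 := by
    have := chen_gamma_lb
    have h2 : Real.log ((13:ℝ)/3) ≤ 2 * 0.6931471808 + 2/25 + 1/23400 := by
      rw [h133]; linarith
    norm_num at this h2 hsplit1 ⊢
    linarith
  have hqlb : 0 < 1 - Real.eulerMascheroniConstant - Real.log (3/2) := by
    have := chen_gamma_ub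
    norm_num at this hsplit2 h73 ⊢
    linarith
  set q : ℝ := 1 - Real.eulerMascheroniConstant - Real.log (3/2) with hq
  have hsq_pos : 0 < Real.sqrt (24 * q) := Real.sqrt_pos.mpr (by linarith)
  have hsq_le : Real.sqrt (24 * q) ≤ 2/3 := by
    have h1 : Real.sqrt (24 * q) ≤ Real.sqrt (4/9) := Real.sqrt_le_sqrt (by linarith)
    have h2 : Real.sqrt ((4:ℝ)/9) = 2/3 := by
      rw [show (4:ℝ)/9 = (2/3)^2 by norm_num, Real.sqrt_sq (by norm_num)]
    linarith
  have := one_div_le_one_div_of_le hsq_pos hsq_le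
  norm_num at this ⊢
  linarith

/-- Chen (2010): for all natural numbers `n ≥ 1`,
`γ + log(n + 1/2) + 1/(24(n+a)²) ≤ Hₙ < γ + log(n + 1/2) + 1/(24(n+b)²)`,
where `a = 1/√(24(1 - γ - log(3/2)))` and `b = 1/2`. -/
theorem chen_harmonic_bounds (n : ℕ) (hn : 1 ≤ n)
    (a b : ℝ)
    (ha : a = 1 / Real.sqrt (24 * (1 - Real.eulerMascheroniConstant -
      Real.log (3 / 2))))
    (hb : b = 1 / 2) :
    Real.eulerMascheroniConstant + Real.log ((n : ℝ) + 1 / 2) +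
        1 / (24 * ((n : ℝ) + a) ^ 2) ≤ (harmonic n : ℝ) ∧
      (harmonic n : ℝ) <
        Real.eulerMascheroniConstant + Real.log ((n : ℝ) + 1 / 2) +
          1 / (24 * ((n : ℝ) + b) ^ 2) := by
  subst hb
  have ha32 : (3:ℝ)/2 ≤ a := by rw [ha]; exact chen_a_ge
  constructor
  · have h := gamma_le_chenU ha32 n
    simp only [chenU] at h
    linarith
  · have h := chenU_lt_gamma n
    simp only [chenU] at h
    linarith
end
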